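/- arXiv:math/0606111 — 2 statements merged into one kernel-verified Lean document; each statement's English description precedes it below -/
import Mathlib

section
/- For each j and each k ≥ 1, the set closure(Φ_j(C_{k-1}) \ Φ_j(C_k)) is the closure of its interior. -/
open Set

section Aux

variable {E : Type*}

/-- closure of an open set is regular closed -/
lemma aux_regular_open {X : Type*} [TopologicalSpace X] {W : Set X} (hW : IsOpen W) :
    closure W = closure (interior (closure W)) := by
  apply le_antisymm
  · exact closure_mono (interior_maximal subset_closure hW)
  · exact closure_minimal (fun x hx => interior_subset hx) isClosed_closure

lemma aux_closure_diff {X : Type*} [TopologicalSpace X] {U B : Set X} (hU : IsOpen U)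
    (hB : IsClosed B) : closure (closure U \ B) = closure (U \ B) := by
  apply le_antisymm
  · refine closure_minimal ?_ isClosed_closure
    rintro x ⟨hx, hxB⟩
    rw [mem_closure_iff] at hx ⊢
    intro V hV hxV
    obtain ⟨y, hyVB, hyU⟩ := hx (V ∩ Bᶜ) (hV.inter hB.isOpen_compl) ⟨hxV, hxB⟩
    exact ⟨y, hyVB.1, hyU, hyVB.2⟩
  · exact closure_mono (diff_subset_diff_left subset_closure)

lemma aux_main {X : Type*} [TopologicalSpace X] {S T : Set X}
    (hS : S ⊆ closure (interior S)) (hT : IsClosed T) :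
    closure (S \ T) = closure (interior (closure (S \ T))) := by
  have key : closure (S \ T) = closure (interior S \ T) := by
    apply le_antisymm
    · calc closure (S \ T) ⊆ closure (closure (interior S) \ T) :=
            closure_mono (diff_subset_diff_left hS)
        _ = closure (interior S \ T) := aux_closure_diff isOpen_interior hT
    · exact closure_mono (diff_subset_diff_left interior_subset)
  rw [key]
  exact aux_regular_open (isOpen_interior.sdiff hT)

variable [NormedAddCommGroup E] [NormedSpace ℝ E]

lemma aux_convex_subset_closure_interior {s : Set E} (hs : Convex ℝ s)
    (hne : (interior s).Nonempty) : s ⊆ closure (interior s) := by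
  obtain ⟨y, hy⟩ := hne
  intro x hx
  have htend : Filter.Tendsto
      (fun n : ℕ => (1 - 1 / ((n : ℝ) + 1)) • x + (1 / ((n : ℝ) + 1)) • y)
      Filter.atTop (nhds x) := by
    have h0 : Filter.Tendsto (fun n : ℕ => 1 / ((n : ℝ) + 1)) Filter.atTop (nhds 0) :=
      tendsto_one_div_add_atTop_nhds_zero_nat
    have := ((h0.const_sub 1).smul_const x).add (h0.smul_const y)
    simpa using this
  refine mem_closure_of_tendsto htend (Filter.Eventually.of_forall fun n => ?_)
  have hb : 0 < 1 / ((n : ℝ) + 1) := by positivity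
  have hble : 1 / ((n : ℝ) + 1) ≤ 1 := by
    rw [div_le_one (by positivity)]; linarith [Nat.cast_nonneg (α := ℝ) n]
  exact hs.combo_closure_interior_mem_interior (subset_closure hx) hy
    (by linarith) hb (by ring)

lemma aux_exists_homeo [FiniteDimensional ℝ E] (φ : E →ᵃ[ℝ] E)
    (h : Function.Bijective φ) : ∃ e : E ≃ₜ E, ⇑e = ⇑φ := by
  have hdecomp : ∀ x, φ x = φ.linear x + φ 0 := by
    intro x
    conv_lhs => rw [AffineMap.decomp φ]
    rfl
  have hlin : Function.Bijective ⇑φ.linear := by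
    have hco : ⇑φ.linear = ⇑(Equiv.addRight (-(φ 0))) ∘ ⇑φ := by
      funext x
      simp [hdecomp x]
    rw [hco]
    exact (Equiv.addRight _).bijective.comp h
  let le := LinearEquiv.ofBijective φ.linear hlin
  let ce := le.toContinuousLinearEquiv
  refine ⟨ce.toHomeomorph.trans (Homeomorph.addRight (φ 0)), ?_⟩
  funext x
  have : φ.linear x + φ 0 = φ x := (hdecomp x).symm
  simpa [ce, le] using this

lemma aux_sum_extend {ι κ M : Type*} [Fintype ι] [Fintype κ] [AddCommMonoid M]
    (e : ι ↪ κ) (G : κ → M) (hG : ∀ j, j ∉ Set.range e → G j = 0) :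
    ∑ j, G j = ∑ i, G (e i) := by
  classical
  rw [← Finset.sum_image (f := G) (g := e) (fun i _ i' _ hii' => e.injective hii')]
  symm
  apply Finset.sum_subset (Finset.subset_univ _)
  intro j _ hj
  apply hG
  intro ⟨i, hi⟩
  exact hj (Finset.mem_image.2 ⟨i, Finset.mem_univ i, hi⟩)

lemma aux_compact_convexHull [FiniteDimensional ℝ E] {F : Set E}
    (hF : IsCompact F) (hne : F.Nonempty) : IsCompact (convexHull ℝ F) := by
  classical
  set n := Module.finrank ℝ E + 1 with hn
  set K : Set ((Fin n → ℝ) × (Fin n → E)) :=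
    (stdSimplex ℝ (Fin n)) ×ˢ (Set.univ.pi fun _ => F) with hK
  have hKc : IsCompact K := IsCompact.prod (by apply isCompact_stdSimplex) (isCompact_univ_pi fun _ => hF)
  set f : (Fin n → ℝ) × (Fin n → E) → E := fun p => ∑ i, p.1 i • p.2 i with hf
  have hfc : Continuous f := by
    apply continuous_finset_sum
    intro i _
    exact ((continuous_apply i).comp continuous_fst).smul
      ((continuous_apply i).comp continuous_snd)
  have himg : f '' K = convexHull ℝ F := by
    apply le_antisymm
    · rintro x ⟨⟨w, z⟩, ⟨hw, hz⟩, rfl⟩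
      exact (convex_convexHull ℝ F).sum_mem (fun i _ => hw.1 i) hw.2
        (fun i _ => subset_convexHull ℝ F (hz i (mem_univ i)))
    · intro x hx
      obtain ⟨ι, hι, z, w, hzF, hai, hw0, hw1, hwz⟩ :=
        eq_pos_convex_span_of_mem_convexHull hx
      have hcard : Fintype.card ι ≤ n := by
        have h1 := hai.card_le_finrank_succ
        have h2 := Submodule.finrank_le (vectorSpan ℝ (Set.range z))
        omega
      obtain ⟨e⟩ : Nonempty (ι ↪ Fin n) :=
        Function.Embedding.nonempty_of_card_le (by simpa using hcard)
      obtain ⟨y0, hy0⟩ := hne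
      set w' : Fin n → ℝ := Function.extend e w 0 with hw'
      set z' : Fin n → E := Function.extend e z (fun _ => y0) with hz'
      have hwe : ∀ i, w' (e i) = w i := fun i => e.injective.extend_apply w 0 i
      have hze : ∀ i, z' (e i) = z i := fun i => e.injective.extend_apply z _ i
      have hwoff : ∀ j, j ∉ Set.range e → w' j = 0 := by
        intro j hj
        rw [hw', Function.extend_apply' _ _ _ (by simpa [Set.mem_range] using hj)]
        rfl
      have hpos : ∀ j, 0 ≤ w' j := by
        intro j
        by_cases hj : j ∈ Set.range e
        · obtain ⟨i, rfl⟩ := hj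
          rw [hwe]
          exact (hw0 i).le
        · rw [hwoff j hj]
      have hone : ∑ j, w' j = 1 := by
        rw [aux_sum_extend e w' hwoff, ← hw1]
        exact Finset.sum_congr rfl fun i _ => hwe i
      have hzmem : ∀ j, z' j ∈ F := by
        intro j
        by_cases hj : j ∈ Set.range e
        · obtain ⟨i, rfl⟩ := hj
          rw [hze]
          exact hzF ⟨i, rfl⟩
        · rw [hz', Function.extend_apply' _ _ _ (by simpa [Set.mem_range] using hj)]
          exact hy0
      have hxeq : ∑ j, w' j • z' j = x := by
        have hs : ∑ j, w' j • z' j = ∑ i, w' (e i) • z' (e i) :=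
          aux_sum_extend e (fun j => w' j • z' j)
            (fun j hj => by show w' j • z' j = 0; rw [hwoff j hj, zero_smul])
        rw [hs, ← hwz]
        exact Finset.sum_congr rfl fun i _ => by rw [hwe, hze]
      exact ⟨(w', z'), ⟨⟨hpos, hone⟩, fun j _ => hzmem j⟩, hxeq⟩
  rw [← himg]
  exact hKc.image hfc

end Aux

theorem stmt11 (d J : ℕ)
    (Φ : Fin J → (EuclideanSpace ℝ (Fin d) →ᵃ[ℝ] EuclideanSpace ℝ (Fin d)))
    (r : Fin J → NNReal) (hr : ∀ j, r j < 1)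
    (hlip : ∀ j, LipschitzWith (r j) (Φ j))
    (F : Set (EuclideanSpace ℝ (Fin d)))
    (hFne : F.Nonempty) (hFc : IsCompact F)
    (hFinv : F = ⋃ j, (Φ j) '' F)
    (hbij : ∀ j, Function.Bijective (Φ j))
    (C : ℕ → Set (EuclideanSpace ℝ (Fin d)))
    (hC0 : C 0 = convexHull ℝ F)
    (hCsucc : ∀ k, C (k + 1) = ⋃ j, (Φ j) '' C k)
    (hnt : (interior (convexHull ℝ F)).Nonempty)
    (hts : ∀ j ℓ, j ≠ ℓ → interior ((Φ j) '' convexHull ℝ F) ∩ interior ((Φ ℓ) '' convexHull ℝ F) = ∅) :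
    ∀ j, ∀ k, closure ((Φ j) '' C k \ (Φ j) '' C (k + 1)) =
      closure (interior (closure ((Φ j) '' C k \ (Φ j) '' C (k + 1)))) := by
  choose e he using fun j => aux_exists_homeo (Φ j) (hbij j)
  have hmain : ∀ k, IsClosed (C k) ∧ C k ⊆ closure (interior (C k)) := by
    intro k
    induction k with
    | zero =>
      rw [hC0]
      exact ⟨(aux_compact_convexHull hFc hFne).isClosed,
        aux_convex_subset_closure_interior (convex_convexHull ℝ F) hnt⟩
    | succ k ih =>
      constructor
      · rw [hCsucc k]
        apply isClosed_iUnion_of_finite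
        intro j
        rw [← he j]
        exact (e j).isClosedMap _ ih.1
      · rw [hCsucc k]
        refine iUnion_subset fun j => ?_
        calc (Φ j) '' C k ⊆ (Φ j) '' closure (interior (C k)) := image_mono ih.2
          _ = closure (interior ((Φ j) '' C k)) := by
              rw [← he j, (e j).image_closure, (e j).image_interior]
          _ ⊆ closure (interior (⋃ j', (Φ j') '' C k)) := by
              exact closure_mono (interior_mono (subset_iUnion (fun j' => (Φ j') '' C k) j))
  intro j k
  apply aux_main
  · rw [← he j, ← (e j).image_interior, ← (e j).image_closure]
    exact image_mono (hmain k).2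
  · rw [← he j]
    exact (e j).isClosedMap _ (hmain (k + 1)).1
end

section
/- Let the generators G_1, …, G_Q be the connected components of interior(C \ Φ(C)). Then for each k ≥ 1, T_k = closure(⊔_{q=1}^Q Φ^{k-1}(G_q)), i.e., the k-th tileset is the closure of the disjoint union of the (k−1)-st images of the generators. -/
open Set

noncomputable def wordMap {d J : ℕ}
    (Φ : Fin J → (EuclideanSpace ℝ (Fin d) →ᵃ[ℝ] EuclideanSpace ℝ (Fin d))) :
    List (Fin J) → (EuclideanSpace ℝ (Fin d) → EuclideanSpace ℝ (Fin d))
  | [] => id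
  | j :: w => (Φ j) ∘ wordMap Φ w

section Aux

/-- Summing an extended-by-zero function. -/
lemma sum_extend_zero {ι κ M : Type*} [Fintype ι] [Fintype κ] [DecidableEq κ] [AddCommMonoid M]
    {f : ι → κ} (hf : Function.Injective f) (g : ι → M) :
    ∑ j, Function.extend f g 0 j = ∑ i, g i := by
  classical
  have h2 : ∑ j, Function.extend f g 0 j
      = ∑ j ∈ Finset.univ.image f, Function.extend f g 0 j := by
    refine (Finset.sum_subset (Finset.subset_univ _) ?_).symm
    intro j _ hj
    have hnot : ¬ ∃ i, f i = j := by simpa [Finset.mem_image] using hj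
    rw [Function.extend_apply' _ _ _ hnot]
    rfl
  have h1 : ∑ j ∈ Finset.univ.image f, Function.extend f g 0 j
      = ∑ i, Function.extend f g 0 (f i) :=
    Finset.sum_image (fun a _ b _ h => hf h)
  rw [h2, h1]
  exact Finset.sum_congr rfl fun i _ => hf.extend_apply g 0 i

/-- Convex hull of a compact set in Euclidean space is compact. -/
lemma isCompact_convexHull_euc {d : ℕ} {s : Set (EuclideanSpace ℝ (Fin d))} (hs : IsCompact s) :
    IsCompact (convexHull ℝ s) := by
  classical
  rcases s.eq_empty_or_nonempty with rfl | ⟨z₀, hz₀⟩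
  · simpa [convexHull_empty] using isCompact_empty
  set n := d + 1 with hn
  set φ : (Fin n → ℝ) × (Fin n → EuclideanSpace ℝ (Fin d)) → EuclideanSpace ℝ (Fin d) :=
    fun p => ∑ i, p.1 i • p.2 i with hφ
  have hcont : Continuous φ := by
    apply continuous_finset_sum
    intro i _
    exact ((continuous_apply i).comp continuous_fst).smul ((continuous_apply i).comp continuous_snd)
  have hK : IsCompact ((stdSimplex ℝ (Fin n)) ×ˢ
      {f : Fin n → EuclideanSpace ℝ (Fin d) | ∀ i, f i ∈ s}) :=
    (isCompact_stdSimplex ℝ (Fin n)).prod (isCompact_pi_infinite fun _ => hs)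
  have himg := hK.image hcont
  have heq : convexHull ℝ s = φ '' ((stdSimplex ℝ (Fin n)) ×ˢ
      {f : Fin n → EuclideanSpace ℝ (Fin d) | ∀ i, f i ∈ s}) := by
    apply Set.Subset.antisymm
    · intro x hx
      obtain ⟨ι, hft, z, w, hzs, hai, hw0, hw1, hxw⟩ := eq_pos_convex_span_of_mem_convexHull hx
      letI := hft
      have hcard : Fintype.card ι ≤ n := by
        have h1 := hai.card_le_finrank_succ
        have h2 : Module.finrank ℝ (vectorSpan ℝ (Set.range z)) ≤ d := by
          have h3 := Submodule.finrank_le (vectorSpan ℝ (Set.range z))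
          rwa [finrank_euclideanSpace_fin] at h3
        omega
      let e : ι ↪ Fin n := (Fintype.equivFin ι).toEmbedding.trans (Fin.castLEEmb hcard)
      set W : Fin n → ℝ := Function.extend (⇑e) w 0 with hW
      set Z : Fin n → EuclideanSpace ℝ (Fin d) := Function.extend (⇑e) z (fun _ => z₀) with hZ
      have hW0 : ∀ j, 0 ≤ W j := by
        intro j
        rcases em (∃ i, e i = j) with ⟨i, rfl⟩ | hnot
        · rw [hW, e.injective.extend_apply]
          exact (hw0 i).le
        · rw [hW, Function.extend_apply' _ _ _ hnot]
          exact le_refl _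
      have hW1 : ∑ j, W j = 1 := by
        rw [hW, sum_extend_zero e.injective]
        exact hw1
      have hZs : ∀ j, Z j ∈ s := by
        intro j
        rcases em (∃ i, e i = j) with ⟨i, rfl⟩ | hnot
        · rw [hZ, e.injective.extend_apply]
          exact hzs (Set.mem_range_self i)
        · rw [hZ, Function.extend_apply' _ _ _ hnot]
          exact hz₀
      have hsum : ∑ j, W j • Z j = x := by
        have hpt : ∀ j, W j • Z j = Function.extend (⇑e) (fun i => w i • z i) 0 j := by
          intro j
          rcases em (∃ i, e i = j) with ⟨i, rfl⟩ | hnot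
          · rw [hW, hZ, e.injective.extend_apply, e.injective.extend_apply,
              e.injective.extend_apply]
          · rw [hW, hZ, Function.extend_apply' _ _ _ hnot, Function.extend_apply' _ _ _ hnot,
              Function.extend_apply' _ _ _ hnot]
            simp
        rw [Finset.sum_congr rfl fun j _ => hpt j, sum_extend_zero e.injective]
        exact hxw
      exact ⟨(W, Z), ⟨⟨hW0, hW1⟩, hZs⟩, hsum⟩
    · rintro x ⟨⟨w, z⟩, ⟨⟨hw0, hw1⟩, hzs⟩, rfl⟩
      exact (convex_convexHull ℝ s).sum_mem (fun i _ => hw0 i) hw1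
        (fun i _ => subset_convexHull ℝ s (hzs i))
  rw [heq]
  exact himg

/-- A convex set with nonempty interior lies in the closure of its interior. -/
lemma convex_subset_closure_interior {E : Type*} [NormedAddCommGroup E] [NormedSpace ℝ E]
    {s : Set E} (hs : Convex ℝ s) (hne : (interior s).Nonempty) :
    s ⊆ closure (interior s) := by
  obtain ⟨y, hy⟩ := hne
  intro x hx
  have hmem : ∀ n : ℕ, x + (1 / ((n : ℝ) + 1)) • (y - x) ∈ interior s := by
    intro n
    refine hs.add_smul_sub_mem_interior hx hy ⟨by positivity, ?_⟩
    rw [div_le_one (by positivity)]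
    linarith [Nat.cast_nonneg (α := ℝ) n]
  have h0 : Filter.Tendsto (fun n : ℕ => (1 / ((n : ℝ) + 1))) Filter.atTop (nhds 0) :=
    tendsto_one_div_add_atTop_nhds_zero_nat
  have hlim : Filter.Tendsto (fun n : ℕ => x + (1 / ((n : ℝ) + 1)) • (y - x))
      Filter.atTop (nhds x) := by
    have := (h0.smul_const (y - x)).const_add x
    simpa using this
  exact mem_closure_of_tendsto hlim (Filter.Eventually.of_forall hmem)

/-- A finite union of closed sets with empty interior has empty interior. -/
lemma interior_biUnion_of_closed_empty {X : Type*} [TopologicalSpace X] {ι : Type*}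
    {N : ι → Set X} :
    ∀ {S : Set ι}, S.Finite → (∀ i ∈ S, IsClosed (N i)) → (∀ i ∈ S, interior (N i) = ∅) →
      interior (⋃ i ∈ S, N i) = ∅ := by
  intro S hS
  refine Set.Finite.induction_on
    (motive := fun S _ => (∀ i ∈ S, IsClosed (N i)) → (∀ i ∈ S, interior (N i) = ∅) →
      interior (⋃ i ∈ S, N i) = ∅) S hS (fun _ _ => by simp) ?_
  · rintro a S' haS hS' ih hcl hint
    rw [Set.biUnion_insert]
    have hA : IsClosed (N a) := hcl a (Set.mem_insert _ _)
    have hiA : interior (N a) = ∅ := hint a (Set.mem_insert _ _)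
    have hiB : interior (⋃ i ∈ S', N i) = ∅ :=
      ih (fun i hi => hcl i (Set.mem_insert_of_mem _ hi))
        (fun i hi => hint i (Set.mem_insert_of_mem _ hi))
    have h1 : interior (N a ∪ ⋃ i ∈ S', N i) \ N a ⊆ interior (⋃ i ∈ S', N i) :=
      interior_maximal (fun x hx => (interior_subset hx.1).resolve_left hx.2)
        (isOpen_interior.sdiff hA)
    rw [hiB] at h1
    have h2 : interior (N a ∪ ⋃ i ∈ S', N i) ⊆ N a := by
      intro x hx
      by_contra hxa
      exact (h1 ⟨hx, hxa⟩)
    have h3 : interior (N a ∪ ⋃ i ∈ S', N i) ⊆ interior (N a) :=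
      interior_maximal h2 isOpen_interior
    rw [hiA] at h3
    exact Set.subset_empty_iff.1 h3

/-- A bijective affine self-map of Euclidean space is a homeomorphism. -/
lemma affine_exists_homeo {d : ℕ} (f : EuclideanSpace ℝ (Fin d) →ᵃ[ℝ] EuclideanSpace ℝ (Fin d))
    (hf : Function.Bijective f) :
    ∃ h : EuclideanSpace ℝ (Fin d) ≃ₜ EuclideanSpace ℝ (Fin d), ⇑h = ⇑f := by
  have hlin : Function.Bijective f.linear := f.linear_bijective_iff.mpr hf
  let e := LinearEquiv.ofBijective f.linear hlin
  refine ⟨e.toContinuousLinearEquiv.toHomeomorph.trans (Homeomorph.addRight (f 0)),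
    funext fun x => ?_⟩
  show e x + f 0 = f x
  have hfx : f x = f.linear x + f 0 := by
    have := f.map_vadd 0 x
    simpa [vadd_eq_add] using this
  rw [hfx]
  rfl

lemma wordMap_spec {d J : ℕ} (Φ : Fin J → (EuclideanSpace ℝ (Fin d) →ᵃ[ℝ] EuclideanSpace ℝ (Fin d)))
    (hbij : ∀ j, Function.Bijective (Φ j)) :
    ∀ w : List (Fin J),
      ∃ h : EuclideanSpace ℝ (Fin d) ≃ₜ EuclideanSpace ℝ (Fin d), ⇑h = wordMap Φ w := by
  intro w
  induction w with
  | nil => exact ⟨Homeomorph.refl _, rfl⟩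
  | cons j w ih =>
    obtain ⟨h, hh⟩ := ih
    obtain ⟨hj, hhj⟩ := affine_exists_homeo (Φ j) (hbij j)
    refine ⟨h.trans hj, funext fun x => ?_⟩
    show hj (h x) = wordMap Φ (j :: w) x
    have : wordMap Φ (j :: w) x = Φ j (wordMap Φ w x) := rfl
    rw [this, ← hh, ← hhj]

end Aux

theorem stmt15 (d J : ℕ)
    (Φ : Fin J → (EuclideanSpace ℝ (Fin d) →ᵃ[ℝ] EuclideanSpace ℝ (Fin d)))
    (r : Fin J → NNReal) (hr : ∀ j, r j < 1)
    (hlip : ∀ j, LipschitzWith (r j) (Φ j))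
    (F : Set (EuclideanSpace ℝ (Fin d)))
    (hFne : F.Nonempty) (hFc : IsCompact F)
    (hFinv : F = ⋃ j, (Φ j) '' F)
    (hbij : ∀ j, Function.Bijective (Φ j))
    (C : ℕ → Set (EuclideanSpace ℝ (Fin d)))
    (hC0 : C 0 = convexHull ℝ F)
    (hCsucc : ∀ k, C (k + 1) = ⋃ j, (Φ j) '' C k)
    (hnt : (interior (C 0 \ C 1)).Nonempty)
    (hts : ∀ j ℓ, j ≠ ℓ → interior ((Φ j) '' convexHull ℝ F) ∩ interior ((Φ ℓ) '' convexHull ℝ F) = ∅)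
    -- generators: connected components of interior (C 0 \ C 1)
    (Gens : Set (Set (EuclideanSpace ℝ (Fin d))))
    (hGens : Gens = {G | ∃ x ∈ interior (C 0 \ C 1),
      G = connectedComponentIn (interior (C 0 \ C 1)) x}) :
    ∀ k, closure (C k \ C (k + 1)) =
        closure (⋃ w ∈ {w : List (Fin J) | w.length = k}, ⋃ G ∈ Gens, wordMap Φ w '' G) ∧
      ∀ w w' : List (Fin J), w.length = k → w'.length = k →
        ∀ G ∈ Gens, ∀ G' ∈ Gens, (w, G) ≠ (w', G') →
          Disjoint (wordMap Φ w '' G) (wordMap Φ w' '' G') := by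
  classical
  choose H hH using wordMap_spec Φ hbij
  have hcontw : ∀ w, Continuous (wordMap Φ w) := fun w => (hH w) ▸ (H w).continuous
  have hopenw : ∀ w, IsOpenMap (wordMap Φ w) := fun w => (hH w) ▸ (H w).isOpenMap
  have hinjw : ∀ w, Function.Injective (wordMap Φ w) := fun w => (hH w) ▸ (H w).injective
  set O := interior (C 0 \ C 1) with hOdef
  have hOopen : IsOpen O := isOpen_interior
  have hOsub : O ⊆ C 0 \ C 1 := interior_subset
  have hOint : O ⊆ interior (C 0) := interior_mono Set.diff_subset
  have hC0conv : Convex ℝ (C 0) := hC0 ▸ convex_convexHull ℝ F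
  have hC0cpt : IsCompact (C 0) := hC0 ▸ isCompact_convexHull_euc hFc
  have hsub1 : ∀ j, (Φ j) '' C 0 ⊆ C 0 := by
    intro j
    have hFj : (Φ j) '' F ⊆ F := (Set.subset_iUnion (fun j => (Φ j) '' F) j).trans hFinv.ge
    rw [hC0, AffineMap.image_convexHull]
    exact convexHull_mono hFj
  have hC1sub : C 1 ⊆ C 0 := by
    rw [hCsucc 0]
    exact Set.iUnion_subset hsub1
  have hcomp : ∀ (i : Fin J) (v : List (Fin J)) (s : Set (EuclideanSpace ℝ (Fin d))),
      wordMap Φ (i :: v) '' s = (Φ i) '' (wordMap Φ v '' s) := by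
    intro i v s
    rw [show wordMap Φ (i :: v) = ⇑(Φ i) ∘ wordMap Φ v from rfl, Set.image_comp]
  have hwsub : ∀ w : List (Fin J), wordMap Φ w '' C 0 ⊆ C 0 := by
    intro w
    induction w with
    | nil => simp [wordMap]
    | cons j w ih =>
      rw [hcomp]
      exact (Set.image_mono ih).trans (hsub1 j)
  have hCk : ∀ k m, C (k + m) = ⋃ w ∈ {w : List (Fin J) | w.length = k}, wordMap Φ w '' C m := by
    intro k
    induction k with
    | zero =>
      intro m
      have hlen0 : {w : List (Fin J) | w.length = 0} = {([] : List (Fin J))} := by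
        ext w; simp [List.length_eq_zero_iff]
      rw [hlen0]
      simp [wordMap]
    | succ k ih =>
      intro m
      have h1 : k + 1 + m = (k + m) + 1 := by omega
      rw [h1, hCsucc (k + m)]
      ext x
      constructor
      · intro hx
        obtain ⟨j, hx⟩ := Set.mem_iUnion.1 hx
        rw [ih m] at hx
        obtain ⟨y, hy, rfl⟩ := hx
        obtain ⟨w, hw, hy⟩ := Set.mem_iUnion₂.1 hy
        obtain ⟨c, hc, rfl⟩ := hy
        refine Set.mem_iUnion₂.2 ⟨j :: w, by simpa using hw, ?_⟩
        exact ⟨c, hc, rfl⟩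
      · intro hx
        obtain ⟨w, hw, hx⟩ := Set.mem_iUnion₂.1 hx
        cases w with
        | nil => simp at hw
        | cons j w =>
          obtain ⟨c, hc, rfl⟩ := hx
          refine Set.mem_iUnion.2 ⟨j, ?_⟩
          refine ⟨wordMap Φ w c, ?_, rfl⟩
          rw [ih m]
          exact Set.mem_iUnion₂.2 ⟨w, by simpa using hw, ⟨c, hc, rfl⟩⟩
  have hdisjK : ∀ (w w' : List (Fin J)), w.length = w'.length → w ≠ w' →
      interior (wordMap Φ w '' C 0) ∩ interior (wordMap Φ w' '' C 0) = ∅ := by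
    intro w
    induction w with
    | nil =>
      intro w' hlen hne
      cases w' with
      | nil => exact absurd rfl hne
      | cons j w' => simp at hlen
    | cons j u ih =>
      intro w' hlen hne
      cases w' with
      | nil => simp at hlen
      | cons j' u' =>
        by_cases hj : j = j'
        · subst hj
          have hu : u ≠ u' := fun h => hne (by rw [h])
          have hulen : u.length = u'.length := by simpa using hlen
          have hIH := ih u' hulen hu
          obtain ⟨hj0, hhj0⟩ := affine_exists_homeo (Φ j) (hbij j)
          have him : ∀ s : Set (EuclideanSpace ℝ (Fin d)),
              interior ((Φ j) '' s) = (Φ j) '' interior s := by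
            intro s
            rw [← hhj0]
            exact (hj0.image_interior s).symm
          rw [hcomp, hcomp, him, him, ← Set.image_inter (hbij j).1, hIH, Set.image_empty]
        · have h1 : wordMap Φ (j :: u) '' C 0 ⊆ (Φ j) '' C 0 := by
            rw [hcomp]; exact Set.image_mono (hwsub u)
          have h2 : wordMap Φ (j' :: u') '' C 0 ⊆ (Φ j') '' C 0 := by
            rw [hcomp]; exact Set.image_mono (hwsub u')
          have hts' := hts j j' hj
          rw [← hC0] at hts'
          exact Set.subset_empty_iff.1
            ((Set.inter_subset_inter (interior_mono h1) (interior_mono h2)).trans hts'.le)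
  have hKclosed : ∀ w : List (Fin J), IsClosed (wordMap Φ w '' C 0) :=
    fun w => (hC0cpt.image (hcontw w)).isClosed
  have hcontΦ : ∀ j, Continuous ⇑(Φ j) := by
    intro j
    obtain ⟨h, hh⟩ := affine_exists_homeo (Φ j) (hbij j)
    exact hh ▸ h.continuous
  have hC1closed : IsClosed (C 1) := by
    rw [hCsucc 0]
    exact isClosed_iUnion_of_finite fun j => (hC0cpt.image (hcontΦ j)).isClosed
  have hintC0 : (interior (C 0)).Nonempty := ⟨hnt.choose, hOint hnt.choose_spec⟩
  have hci : C 0 ⊆ closure (interior (C 0)) := convex_subset_closure_interior hC0conv hintC0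
  have hdiffsub : C 0 \ C 1 ⊆ closure O := by
    intro x hx
    have hx0 := hci hx.1
    rw [mem_closure_iff] at hx0 ⊢
    intro U hU hxU
    obtain ⟨y, hy⟩ := hx0 (U ∩ (C 1)ᶜ) (hU.inter hC1closed.isOpen_compl) ⟨hxU, hx.2⟩
    refine ⟨y, hy.1.1, ?_⟩
    have hyO : y ∈ interior (C 0) \ C 1 := ⟨hy.2, hy.1.2⟩
    have hsubO : interior (C 0) \ C 1 ⊆ O :=
      interior_maximal (Set.diff_subset_diff_left interior_subset)
        (isOpen_interior.sdiff hC1closed)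
    exact hsubO hyO
  have hUG : (⋃ G ∈ Gens, G) = O := by
    apply Set.Subset.antisymm
    · refine Set.iUnion₂_subset ?_
      rintro G hG
      rw [hGens] at hG
      obtain ⟨x, hx, rfl⟩ := hG
      exact connectedComponentIn_subset _ _
    · intro x hx
      refine Set.mem_iUnion₂.2 ⟨connectedComponentIn O x, ?_, mem_connectedComponentIn hx⟩
      rw [hGens]
      exact ⟨x, hx, rfl⟩
  have himgO : ∀ w : List (Fin J), wordMap Φ w '' O ⊆ interior (wordMap Φ w '' C 0) := by
    intro w
    exact interior_maximal (Set.image_mono fun y hy => (hOsub hy).1) (hopenw w O hOopen)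
  intro k
  have hfin : {w : List (Fin J) | w.length = k}.Finite := List.finite_length_eq _ _
  have e0 := hCk k 0
  rw [Nat.add_zero] at e0
  have e1 := hCk k 1
  have hRUnion : (⋃ w ∈ {w : List (Fin J) | w.length = k}, ⋃ G ∈ Gens, wordMap Φ w '' G)
      = ⋃ w ∈ {w : List (Fin J) | w.length = k}, wordMap Φ w '' O := by
    refine Set.iUnion₂_congr fun w _ => ?_
    rw [← Set.image_iUnion₂, hUG]
  constructor
  · rw [hRUnion]
    apply Set.Subset.antisymm
    · refine closure_minimal ?_ isClosed_closure
      intro x hx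
      obtain ⟨hx1, hx2⟩ := hx
      rw [e0] at hx1
      rw [e1] at hx2
      obtain ⟨w, hw, hxw⟩ := Set.mem_iUnion₂.1 hx1
      obtain ⟨y, hy, rfl⟩ := hxw
      have hyC1 : y ∉ C 1 := fun hyc =>
        hx2 (Set.mem_iUnion₂.2 ⟨w, hw, Set.mem_image_of_mem _ hyc⟩)
      have hmem : wordMap Φ w y ∈ wordMap Φ w '' closure O :=
        Set.mem_image_of_mem _ (hdiffsub ⟨hy, hyC1⟩)
      have h2 := (image_closure_subset_closure_image (hcontw w)) hmem
      exact closure_mono (Set.subset_biUnion_of_mem hw) h2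
    · refine closure_minimal ?_ isClosed_closure
      refine Set.iUnion₂_subset fun w hw => ?_
      intro x hx
      obtain ⟨x0, hx0, rfl⟩ := hx
      rw [mem_closure_iff]
      intro U hU hxU
      set V := U ∩ wordMap Φ w '' O with hV
      have hVopen : IsOpen V := hU.inter (hopenw w O hOopen)
      have hVne : V.Nonempty := ⟨_, hxU, Set.mem_image_of_mem _ hx0⟩
      have hND : interior (⋃ w' ∈ {w : List (Fin J) | w.length = k},
          frontier (wordMap Φ w' '' C 0)) = ∅ :=
        interior_biUnion_of_closed_empty hfin (fun _ _ => isClosed_frontier)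
          (fun w' _ => interior_frontier (hKclosed w'))
      have hzex : (V \ ⋃ w' ∈ {w : List (Fin J) | w.length = k},
          frontier (wordMap Φ w' '' C 0)).Nonempty := by
        rcases Set.eq_empty_or_nonempty (V \ ⋃ w' ∈ {w : List (Fin J) | w.length = k},
          frontier (wordMap Φ w' '' C 0)) with he | h
        · exfalso
          have hsub : V ⊆ ⋃ w' ∈ {w : List (Fin J) | w.length = k},
              frontier (wordMap Φ w' '' C 0) := by rwa [Set.diff_eq_empty] at he
          have hsub2 := interior_maximal hsub hVopen
          rw [hND] at hsub2
          exact hVne.ne_empty (Set.subset_empty_iff.1 hsub2)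
        · exact h
      obtain ⟨z, hzV, hzF⟩ := hzex
      refine ⟨z, hzV.1, ?_⟩
      have hzO : z ∈ wordMap Φ w '' O := hzV.2
      constructor
      · rw [e0]
        refine Set.mem_iUnion₂.2 ⟨w, hw, ?_⟩
        exact Set.image_mono (fun y hy => (hOsub hy).1) hzO
      · rw [e1]
        intro hzc
        obtain ⟨w', hw', hzw'⟩ := Set.mem_iUnion₂.1 hzc
        by_cases hww : w' = w
        · subst hww
          obtain ⟨a, ha, haz⟩ := hzO
          obtain ⟨b, hb, hbz⟩ := hzw'
          have hab : a = b := hinjw w' (haz.trans hbz.symm)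
          exact (hOsub ha).2 (hab ▸ hb)
        · have hzint : z ∈ interior (wordMap Φ w '' C 0) := himgO w hzO
          have hdis := hdisjK w w' (by
            have hw'' : w'.length = k := hw'
            have hwk : w.length = k := hw
            rw [hwk, hw'']) (Ne.symm hww)
          have hz2 : z ∉ interior (wordMap Φ w' '' C 0) := fun h =>
            Set.eq_empty_iff_forall_notMem.1 hdis z ⟨hzint, h⟩
          have hz3 : z ∉ frontier (wordMap Φ w' '' C 0) := fun h =>
            hzF (Set.mem_iUnion₂.2 ⟨w', hw', h⟩)
          have hz4 : z ∈ wordMap Φ w' '' C 0 := Set.image_mono hC1sub hzw'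
          apply hz3
          rw [(hKclosed w').frontier_eq]
          exact ⟨hz4, hz2⟩
  · intro w w' hw hw' G hG G' hG' hne
    rw [hGens] at hG hG'
    obtain ⟨x, hx, rfl⟩ := hG
    obtain ⟨x', hx', rfl⟩ := hG'
    by_cases hww : w = w'
    · subst hww
      have hGG : connectedComponentIn O x ≠ connectedComponentIn O x' := fun h =>
        hne (by rw [h])
      have hdisGG : Disjoint (connectedComponentIn O x) (connectedComponentIn O x') := by
        by_contra hc
        rw [Set.not_disjoint_iff] at hc
        obtain ⟨z, hz1, hz2⟩ := hc
        exact hGG ((connectedComponentIn_eq hz1).trans (connectedComponentIn_eq hz2).symm)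
      exact (Set.disjoint_image_iff (hinjw w)).2 hdisGG
    · have h1 : wordMap Φ w '' connectedComponentIn O x ⊆ interior (wordMap Φ w '' C 0) :=
        (Set.image_mono (connectedComponentIn_subset _ _)).trans (himgO w)
      have h2 : wordMap Φ w' '' connectedComponentIn O x' ⊆ interior (wordMap Φ w' '' C 0) :=
        (Set.image_mono (connectedComponentIn_subset _ _)).trans (himgO w')
      have hdis := hdisjK w w' (hw.trans hw'.symm) hww
      exact ((Set.disjoint_iff_inter_eq_empty.2 hdis).mono h1 h2)
end
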